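/- Let K be a field of characteristic zero and let V, U : ℕ → K be sequences with V_n ≠ 0 and U_n ≠ 0 for all n ≥ 1. Fix integers r, s ≥ 1 and elements g₁, g₂ ∈ K. Then the identity V_{r+s} = g₁·V_r + g₂·U_s holds if and only if the mixed-binomial recurrence M(r, s) = g₁·M(r−1, s) + g₂·M(r, s−1) holds, where M(r, s) denotes the V-mixed-U binomial coefficient. -/

import Mathlib

/-- The `F`-factorial: `ffact F 0 = 1`, `ffact F n = F n * F (n-1) * ... * F 1`. -/
def ffact {K : Type*} [Field K] (F : ℕ → K) : ℕ → K
  | 0 => 1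
  | n + 1 => F (n + 1) * ffact F n

/-- The `V`-mixed-`U` binomial coefficient `M(r, s) = V_{r+s}! / (V_r! * U_s!)`. -/
def mixedBinom {K : Type*} [Field K] (V U : ℕ → K) (r s : ℕ) : K :=
  ffact V (r + s) / (ffact V r * ffact U s)

lemma ffact_ne_zero {K : Type*} [Field K] (F : ℕ → K) (hF : ∀ n, 1 ≤ n → F n ≠ 0) :
    ∀ n, ffact F n ≠ 0
  | 0 => by simp [ffact]
  | n + 1 => by
    simp only [ffact]
    exact mul_ne_zero (hF _ (Nat.succ_le_succ (Nat.zero_le _))) (ffact_ne_zero F hF n)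

theorem stmt2 {K : Type*} [Field K] [CharZero K] (V U : ℕ → K)
    (hV : ∀ n, 1 ≤ n → V n ≠ 0) (hU : ∀ n, 1 ≤ n → U n ≠ 0)
    (r s : ℕ) (hr : 1 ≤ r) (hs : 1 ≤ s) (g₁ g₂ : K) :
    V (r + s) = g₁ * V r + g₂ * U s ↔
      mixedBinom V U r s =
        g₁ * mixedBinom V U (r - 1) s + g₂ * mixedBinom V U r (s - 1) := by
  obtain ⟨a, rfl⟩ : ∃ a, r = a + 1 := ⟨r - 1, (Nat.succ_pred_eq_of_pos hr).symm⟩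
  obtain ⟨b, rfl⟩ : ∃ b, s = b + 1 := ⟨s - 1, (Nat.succ_pred_eq_of_pos hs).symm⟩
  have hVa := ffact_ne_zero V hV a
  have hVa1 := ffact_ne_zero V hV (a+1)
  have hUb := ffact_ne_zero U hU b
  have hUb1 := ffact_ne_zero U hU (b+1)
  have hT := ffact_ne_zero V hV (a+b+1)
  have hV1 : V (a+1) ≠ 0 := hV _ (by omega)
  have hU1 : U (b+1) ≠ 0 := hU _ (by omega)
  have e1 : (a+1) + (b+1) = (a+b+1) + 1 := by ring
  have e2 : a + (b+1) = a+b+1 := by ring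
  have e3 : (a+1) + b = a+b+1 := by ring
  set c : K := ffact V (a+b+1) / (ffact V (a+1) * ffact U (b+1)) with hc_def
  have hc : c ≠ 0 := div_ne_zero hT (mul_ne_zero hVa1 hUb1)
  have h1 : mixedBinom V U (a+1) (b+1) = V (a+b+1+1) * c := by
    simp only [mixedBinom, ffact, Nat.add_eq, e1, e3, hc_def]
    ring
  have h2 : mixedBinom V U a (b+1) = V (a+1) * c := by
    simp only [mixedBinom, ffact, Nat.add_eq, e2, hc_def]
    field_simp
  have h3 : mixedBinom V U (a+1) b = U (b+1) * c := by
    simp only [mixedBinom, ffact, Nat.add_eq, e3, hc_def]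
    field_simp
  simp only [Nat.add_sub_cancel, h1, h2, h3, e1]
  rw [show g₁ * (V (a+1) * c) + g₂ * (U (b+1) * c) = (g₁ * V (a+1) + g₂ * U (b+1)) * c from by ring]
  exact (mul_left_inj' hc).symm
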